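/- Let q : (K,G) → (L,G) be an open extension of topological dynamical systems. Then the Koopman action on C_q(K) is continuous: the map G × C_q(K) → C_q(K) which sends (g, f) with f ∈ C(K_l, ℂ) to the function T_g f ∈ C(K_{g·l}, ℂ) defined by (T_g f)(x) = f(g⁻¹·x), is continuous with respect to the product of the topology of G and the compact-open topology on C_q(K). -/

import Mathlib

open Filter Topology Set Function MeasureTheory

/-- A continuous fiber map between the fibers of the bundles `p : X → L` and `q : Y → L'`:
an element of `C_p^q(X,Y)` with source `src` and range `rng`. -/
structure FiberMap {X L Y L' : Type} [TopologicalSpace X] [TopologicalSpace Y]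
    (p : X → L) (q : Y → L') where
  src : L
  rng : L'
  toFun : {x : X // p x = src} → Y
  maps_to : ∀ x, q (toFun x) = rng
  continuous_toFun : Continuous toFun

/-- The compact-open topology on `C_p^q(X,Y)`, generated by the sets
`W(C,O) = {θ | θ(C ∩ X_{s(θ)}) ⊆ O}` for `C ⊆ X` compact and `O ⊆ Y` open. -/
def fiberCO {X L Y L' : Type} [TopologicalSpace X] [TopologicalSpace Y]
    (p : X → L) (q : Y → L') : TopologicalSpace (FiberMap p q) :=
  TopologicalSpace.generateFrom
    {W | ∃ (C : Set X) (O : Set Y), IsCompact C ∧ IsOpen O ∧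
      W = {θ : FiberMap p q | ∀ x : {x : X // p x = θ.src}, (x : X) ∈ C → θ.toFun x ∈ O}}

instance fiberMapTopology {X L Y L' : Type} [TopologicalSpace X] [TopologicalSpace Y]
    (p : X → L) (q : Y → L') : TopologicalSpace (FiberMap p q) :=
  fiberCO p q

/-- The Koopman operator: for `g ∈ G` and `f ∈ C(K_l, ℂ)`, the function
`T_g f ∈ C(K_{g•l}, ℂ)` given by `(T_g f)(x) = f(g⁻¹ • x)`. -/
noncomputable def koopman {G K L : Type} [Group G] [TopologicalSpace K] [MulAction G K]
    [ContinuousConstSMul G K] [MulAction G L] (q : K → L)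
    (heq : ∀ (g : G) (x : K), q (g • x) = g • q x) (g : G)
    (f : FiberMap q (fun _ : ℂ => ())) : FiberMap q (fun _ : ℂ => ()) where
  src := g • f.src
  rng := ()
  toFun x := f.toFun ⟨g⁻¹ • (x : K), by rw [heq, x.2, inv_smul_smul]⟩
  maps_to _ := rfl
  continuous_toFun := f.continuous_toFun.comp
    (((continuous_const_smul g⁻¹).comp continuous_subtype_val).subtype_mk
      (fun x => by show q (g⁻¹ • (x : K)) = f.src; rw [heq, x.2, inv_smul_smul]))

/-- The Koopman action of `G` on `C_q(K)` is jointly continuous with respect to the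
compact-open topology. -/
theorem statement16 {G K L : Type} [Group G] [TopologicalSpace G] [IsTopologicalGroup G]
    [T2Space G] [TopologicalSpace K] [CompactSpace K] [T2Space K] [Nonempty K]
    [TopologicalSpace L] [CompactSpace L] [T2Space L] [Nonempty L]
    [MulAction G K] [ContinuousSMul G K] [MulAction G L] [ContinuousSMul G L]
    (q : K → L) (hq : Continuous q) (hqs : Function.Surjective q) (hqo : IsOpenMap q)
    (heq : ∀ (g : G) (x : K), q (g • x) = g • q x) :
    Continuous (fun z : G × FiberMap q (fun _ : ℂ => ()) =>
      koopman q heq z.1 z.2) := by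
  have hgen : Continuous (fun z : G × FiberMap q (fun _ : ℂ => ()) =>
      koopman q heq z.1 z.2) ↔ ∀ s ∈ {W | ∃ (C : Set K) (O : Set ℂ), IsCompact C ∧ IsOpen O ∧
      W = {θ : FiberMap q (fun _ : ℂ => ()) | ∀ x : {x : K // q x = θ.src},
        (x : K) ∈ C → θ.toFun x ∈ O}},
      IsOpen ((fun z : G × FiberMap q (fun _ : ℂ => ()) => koopman q heq z.1 z.2) ⁻¹' s) :=
    continuous_generateFrom_iff
  rw [hgen]
  rintro W ⟨C, O, hC, hO, rfl⟩
  rw [isOpen_iff_mem_nhds]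
  rintro ⟨g₀, f₀⟩ hmem
  simp only [mem_preimage, mem_setOf_eq] at hmem
  -- extract an open set in K inducing f₀ ⁻¹' O
  obtain ⟨UK, hUKopen, hUKeq⟩ :=
    isOpen_induced_iff.mp (hO.preimage f₀.continuous_toFun)
  set F : Set K := q ⁻¹' {f₀.src} with hFdef
  have hFclosed : IsClosed F := isClosed_singleton.preimage hq
  set Om : Set K := (F \ UK)ᶜ with hOmdef
  have hOmopen : IsOpen Om := (hFclosed.sdiff hUKopen).isOpen_compl
  set D : Set K := (fun x => g₀⁻¹ • x) '' C with hDdef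
  have hD : IsCompact D := hC.image (continuous_const_smul _)
  have hDOm : D ⊆ Om := by
    rintro _ ⟨x, hxC, rfl⟩ ⟨hyF, hyU⟩
    have hqx : q x = g₀ • f₀.src := by
      have := heq g₀⁻¹ x
      rw [hyF] at this
      have : q x = g₀ • f₀.src := by
        have h2 := congrArg (g₀ • ·) this.symm
        simpa [smul_smul] using h2
      exact this
    have hmem' := hmem ⟨x, hqx⟩ hxC
    have : (⟨g₀⁻¹ • x, by rw [heq, hqx, inv_smul_smul]⟩ :
        {y : K // q y = f₀.src}) ∈ f₀.toFun ⁻¹' O := hmem'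
    rw [← hUKeq] at this
    exact hyU this
  obtain ⟨Om', hOm'open, hDOm', hclOm'⟩ :=
    normal_exists_closure_subset hD.isClosed hOmopen hDOm
  -- tube lemma
  have hnopen : IsOpen ((fun p : G × K => p.1⁻¹ • p.2) ⁻¹' Om') :=
    hOm'open.preimage ((continuous_fst.inv).smul continuous_snd)
  have hsub0 : ({g₀} : Set G) ×ˢ C ⊆ (fun p : G × K => p.1⁻¹ • p.2) ⁻¹' Om' := by
    rintro ⟨g, x⟩ ⟨hg, hx⟩
    rcases hg with rfl
    exact hDOm' ⟨x, hx, rfl⟩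
  obtain ⟨U, V, hUopen, _, hg₀U, hCV, hUV⟩ :=
    generalized_tube_lemma isCompact_singleton hC hnopen hsub0
  set W' : Set (FiberMap q (fun _ : ℂ => ())) :=
    {θ | ∀ x : {x : K // q x = θ.src}, (x : K) ∈ closure Om' → θ.toFun x ∈ O} with hW'def
  have hW'open : IsOpen W' := by
    apply TopologicalSpace.isOpen_generateFrom_of_mem
    exact ⟨closure Om', O, isClosed_closure.isCompact, hO, rfl⟩
  refine mem_nhds_iff.mpr ⟨U ×ˢ W', ?_, hUopen.prod hW'open, ⟨hg₀U rfl, ?_⟩⟩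
  · rintro ⟨g, f⟩ ⟨hgU, hfW⟩
    intro x hxC
    have hx' : g⁻¹ • (x : K) ∈ Om' := hUV (show (g, (x : K)) ∈ U ×ˢ V from ⟨hgU, hCV hxC⟩)
    have hx2 : q (x : K) = g • f.src := x.2
    have hqy : q (g⁻¹ • (x : K)) = f.src := by rw [heq, hx2, inv_smul_smul]
    exact hfW ⟨g⁻¹ • (x : K), hqy⟩ (subset_closure hx')
  · intro y hy
    have hyOm : (y : K) ∈ Om := hclOm' hy
    have hyF : (y : K) ∈ F := y.2
    have hyUK : (y : K) ∈ UK := by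
      by_contra h
      exact hyOm ⟨hyF, h⟩
    have : y ∈ Subtype.val ⁻¹' UK := hyUK
    rw [hUKeq] at this
    exact this
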